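/- Let K be an algebraically closed nonarchimedean normed field whose norm is nontrivial. Then for every polynomial p ∈ K[T] and every R > 0, the supremum of ‖p(z)‖ over all z ∈ K with ‖z‖ ≤ R equals the Gauss norm ‖p‖_R; that is, sup { ‖p(z)‖ : z ∈ K, ‖z‖ ≤ R } = max_j (‖a_j‖ · R^j) where p = ∑_j a_j T^j. -/

import Mathlib

open Polynomial

private lemma na_sum_le {K : Type*} [NormedField K]
    (hna : ∀ a b : K, ‖a + b‖ ≤ max ‖a‖ ‖b‖)
    {ι : Type*} (s : Finset ι) (g : ι → K) {M : ℝ} (hM : 0 ≤ M)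
    (h : ∀ i ∈ s, ‖g i‖ ≤ M) : ‖∑ i ∈ s, g i‖ ≤ M := by
  classical
  induction s using Finset.induction_on with
  | empty => simpa using hM
  | @insert a s ha ih =>
    rw [Finset.sum_insert ha]
    exact (hna _ _).trans (max_le (h a (Finset.mem_insert_self _ _))
      (ih fun i hi => h i (Finset.mem_insert_of_mem hi)))

private lemma na_sum_lt {K : Type*} [NormedField K]
    (hna : ∀ a b : K, ‖a + b‖ ≤ max ‖a‖ ‖b‖)
    {ι : Type*} (s : Finset ι) (g : ι → K) {M : ℝ} (hM : 0 < M)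
    (h : ∀ i ∈ s, ‖g i‖ < M) : ‖∑ i ∈ s, g i‖ < M := by
  classical
  induction s using Finset.induction_on with
  | empty => simpa using hM
  | @insert a s ha ih =>
    rw [Finset.sum_insert ha]
    exact lt_of_le_of_lt (hna _ _) (max_lt (h a (Finset.mem_insert_self _ _))
      (ih fun i hi => h i (Finset.mem_insert_of_mem hi)))

private lemma na_sum_eq {K : Type*} [NormedField K]
    (hna : ∀ a b : K, ‖a + b‖ ≤ max ‖a‖ ‖b‖)
    {ι : Type*} (s : Finset ι) (g : ι → K) {i0 : ι} (hi0 : i0 ∈ s)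
    (h : ∀ i ∈ s, i ≠ i0 → ‖g i‖ < ‖g i0‖) :
    ‖∑ i ∈ s, g i‖ = ‖g i0‖ := by
  classical
  have hsum : ∑ i ∈ s, g i = g i0 + ∑ i ∈ s.erase i0, g i :=
    (Finset.add_sum_erase s g hi0).symm
  rcases (s.erase i0).eq_empty_or_nonempty with he | ⟨i1, hi1⟩
  · rw [hsum, he]; simp
  · have hpos : 0 < ‖g i0‖ :=
      lt_of_le_of_lt (norm_nonneg _)
        (h i1 (Finset.mem_of_mem_erase hi1) (Finset.ne_of_mem_erase hi1))
    have hrest : ‖∑ i ∈ s.erase i0, g i‖ < ‖g i0‖ :=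
      na_sum_lt hna _ _ hpos fun i hi =>
        h i (Finset.mem_of_mem_erase hi) (Finset.ne_of_mem_erase hi)
    refine le_antisymm ?_ ?_
    · rw [hsum]
      exact (hna _ _).trans (max_le le_rfl hrest.le)
    · have key : ‖g i0‖ ≤ max ‖∑ i ∈ s, g i‖ ‖∑ i ∈ s.erase i0, g i‖ := by
        have : g i0 = (∑ i ∈ s, g i) + (-∑ i ∈ s.erase i0, g i) := by
          rw [hsum]; ring
        calc ‖g i0‖ = ‖(∑ i ∈ s, g i) + (-∑ i ∈ s.erase i0, g i)‖ := by rw [← this]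
          _ ≤ max ‖∑ i ∈ s, g i‖ ‖-∑ i ∈ s.erase i0, g i‖ := hna _ _
          _ = max ‖∑ i ∈ s, g i‖ ‖∑ i ∈ s.erase i0, g i‖ := by rw [norm_neg]
      rcases max_cases ‖∑ i ∈ s, g i‖ ‖∑ i ∈ s.erase i0, g i‖ with ⟨hm, _⟩ | ⟨hm, _⟩
      · rwa [hm] at key
      · rw [hm] at key; exact absurd (lt_of_le_of_lt key hrest) (lt_irrefl _)

/-- Density of norm values: in an algebraically closed nonarchimedean normed field with
nontrivial norm, every interval `(a, b)` with `0 < a < b` contains the norm of an element. -/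
private lemma exists_norm_mem_Ioo {K : Type*} [NormedField K] [IsAlgClosed K]
    (hnt : ∃ x : K, x ≠ 0 ∧ ‖x‖ ≠ 1) {a b : ℝ} (ha : 0 < a) (hab : a < b) :
    ∃ c : K, a < ‖c‖ ∧ ‖c‖ < b := by
  obtain ⟨x, hx0, hx1⟩ := hnt
  have hx : (0 : ℝ) < ‖x‖ := norm_pos_iff.2 hx0
  obtain ⟨u, hu⟩ : ∃ u : K, 1 < ‖u‖ := by
    rcases lt_or_gt_of_ne hx1 with h | h
    · exact ⟨x⁻¹, by rw [norm_inv]; exact (one_lt_inv₀ hx).2 h⟩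
    · exact ⟨x, h⟩
  have hba : (1 : ℝ) < b / a := (one_lt_div ha).2 hab
  obtain ⟨n, hn⟩ := pow_unbounded_of_one_lt ‖u‖ hba
  have hn' : ‖u‖ < (b / a) ^ (n + 1) :=
    hn.trans_le (pow_le_pow_right₀ hba.le (Nat.le_succ n))
  obtain ⟨y, hy⟩ := IsAlgClosed.exists_pow_nat_eq u (Nat.succ_pos n)
  set s := ‖y‖ with hs
  have hspow : s ^ (n + 1) = ‖u‖ := by rw [hs, ← norm_pow, hy]
  have hs1 : 1 < s := by
    have h1 : (1 : ℝ) < s ^ (n + 1) := by rw [hspow]; exact hu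
    exact (one_lt_pow_iff_of_nonneg (norm_nonneg _) (Nat.succ_ne_zero n)).1 h1
  have hsb : s < b / a := by
    refine lt_of_pow_lt_pow_left₀ (n + 1) (by positivity) ?_
    rw [hspow]; exact hn'
  obtain ⟨k, hk1, hk2⟩ := exists_mem_Ico_zpow ha hs1
  refine ⟨y ^ (k + 1), ?_, ?_⟩
  · rw [norm_zpow]; exact hk2
  · rw [norm_zpow, zpow_add_one₀ (by positivity : s ≠ 0)]
    calc s ^ k * s ≤ a * s := by
          exact mul_le_mul_of_nonneg_right hk1 (by positivity)
      _ < a * (b / a) := by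
          exact mul_lt_mul_of_pos_left hsb ha
      _ = b := by field_simp

/-- The Gauss norm of radius `R` on `K[T]`: for `p = ∑ a_j T^j`,
`‖p‖_R = max_j ‖a_j‖ * R ^ j` (and `‖0‖_R = 0`). -/
noncomputable def gaussNorm {K : Type*} [NormedField K] (R : ℝ) (p : K[X]) : ℝ :=
  ⨆ j : ℕ, ‖p.coeff j‖ * R ^ j

/-- Let `K` be an algebraically closed nonarchimedean normed field with
nontrivial norm. Then for every `p ∈ K[T]` and every `R > 0`, the supremum of `‖p(z)‖` over
`z ∈ K` with `‖z‖ ≤ R` equals the Gauss norm `‖p‖_R`. -/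
theorem sup_eval_closedBall_eq_gaussNorm
    {K : Type*} [NormedField K] [IsAlgClosed K]
    (hna : ∀ a b : K, ‖a + b‖ ≤ max ‖a‖ ‖b‖)
    (hnt : ∃ x : K, x ≠ 0 ∧ ‖x‖ ≠ 1)
    (p : K[X]) (R : ℝ) (hR : 0 < R) :
    sSup {y : ℝ | ∃ z : K, ‖z‖ ≤ R ∧ y = ‖p.eval z‖} = gaussNorm R p := by
  classical
  set S : Set ℝ := {y : ℝ | ∃ z : K, ‖z‖ ≤ R ∧ y = ‖p.eval z‖} with hS
  by_cases hp : p = 0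
  · subst hp
    have : S = {0} := by
      ext y
      simp only [hS, Set.mem_setOf_eq, Set.mem_singleton_iff, eval_zero, norm_zero]
      constructor
      · rintro ⟨z, _, rfl⟩; rfl
      · rintro rfl; exact ⟨0, by simpa using hR.le, rfl⟩
    rw [this, csSup_singleton]
    simp [_root_.gaussNorm]
  -- p ≠ 0
  set n := p.natDegree with hn
  set f : ℕ → ℝ := fun j => ‖p.coeff j‖ * R ^ j with hf
  -- a minimal global maximizing index
  have hPex : ∃ j, ∀ i, f i ≤ f j := by
    obtain ⟨jm, hjm, hjmax⟩ := Finset.exists_max_image (Finset.range (n + 1)) f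
      ⟨0, Finset.mem_range.2 (Nat.succ_pos n)⟩
    refine ⟨jm, fun i => ?_⟩
    by_cases hin : i ≤ n
    · exact hjmax i (Finset.mem_range.2 (Nat.lt_succ_of_le hin))
    · have hz : p.coeff i = 0 := p.coeff_eq_zero_of_natDegree_lt (by omega)
      have h0 : f i = 0 := by simp [hf, hz]
      rw [h0]
      exact mul_nonneg (norm_nonneg _) (by positivity)
  set j0 := Nat.find hPex with hj0def
  have hmax : ∀ j, f j ≤ f j0 := Nat.find_spec hPex
  have hfpos : 0 < f j0 := by
    have hc : p.coeff n ≠ 0 := by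
      rw [hn, Polynomial.coeff_natDegree]
      exact mt Polynomial.leadingCoeff_eq_zero.1 hp
    exact lt_of_lt_of_le (mul_pos (norm_pos_iff.2 hc) (pow_pos hR n)) (hmax n)
  have hj0le : j0 ≤ n := by
    by_contra h
    have hz : p.coeff j0 = 0 := p.coeff_eq_zero_of_natDegree_lt (by omega)
    have : f j0 = 0 := by simp [hf, hz]
    rw [this] at hfpos; exact lt_irrefl _ hfpos
  have hj0mem : j0 ∈ Finset.range (n + 1) := Finset.mem_range.2 (Nat.lt_succ_of_le hj0le)
  have ha0 : p.coeff j0 ≠ 0 := by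
    intro h
    rw [hf] at hfpos
    simp only [h, norm_zero, zero_mul] at hfpos
    exact lt_irrefl _ hfpos
  -- strict maximality for indices below j0
  have hstrict_lt : ∀ j, j < j0 → f j < f j0 := by
    intro j hj
    rcases lt_or_eq_of_le (hmax j) with h | h
    · exact h
    · exact absurd (fun i => h ▸ hmax i) (Nat.find_min hPex hj)
  -- the Gauss norm equals f j0
  have hbdd : BddAbove (Set.range f) := ⟨f j0, by rintro _ ⟨j, rfl⟩; exact hmax j⟩
  have hgauss : gaussNorm R p = f j0 :=
    le_antisymm (ciSup_le hmax) (le_ciSup hbdd j0)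
  -- upper bound on S
  have hub : ∀ y ∈ S, y ≤ f j0 := by
    rintro y ⟨z, hz, rfl⟩
    rw [eval_eq_sum_range]
    refine na_sum_le hna _ _ hfpos.le fun j hj => ?_
    rw [norm_mul, norm_pow]
    calc ‖p.coeff j‖ * ‖z‖ ^ j ≤ ‖p.coeff j‖ * R ^ j := by
          exact mul_le_mul_of_nonneg_left (pow_le_pow_left₀ (norm_nonneg _) hz j)
            (norm_nonneg _)
      _ ≤ f j0 := hmax j
  have hSne : S.Nonempty := ⟨‖p.eval 0‖, 0, by simpa using hR.le, rfl⟩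
  have hSbdd : BddAbove S := ⟨f j0, hub⟩
  rw [hgauss]
  refine le_antisymm (csSup_le hSne hub) ?_
  -- lower bound: f j0 ≤ sSup S
  refine le_of_forall_pos_le_add fun ε hε => ?_
  -- eventually (in r near R): strictness below j0 and value close to f j0
  have hcont : ∀ j : ℕ, ContinuousAt (fun r : ℝ => ‖p.coeff j‖ * r ^ j) R := by
    intro j; fun_prop
  have h1 : ∀ᶠ r in nhds R, ∀ j ∈ Finset.range j0,
      ‖p.coeff j‖ * r ^ j < ‖p.coeff j0‖ * r ^ j0 := by
    rw [Filter.eventually_all_finset]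
    intro j hj
    exact (hcont j).eventually_lt (hcont j0) (hstrict_lt j (Finset.mem_range.1 hj))
  have h2 : ∀ᶠ r in nhds R, f j0 - ε < ‖p.coeff j0‖ * r ^ j0 :=
    ContinuousAt.eventually_lt (f := fun _ : ℝ => f j0 - ε) (by fun_prop) (hcont j0)
      (by simp only [hf]; linarith)
  obtain ⟨δ, hδ, hδP⟩ := Metric.eventually_nhds_iff.1 (h1.and h2)
  -- pick c with max (R - δ) (R / 2) < ‖c‖ < R
  have hlta : max (R - δ) (R / 2) < R := max_lt (by linarith) (by linarith)
  obtain ⟨c, hc1, hc2⟩ := exists_norm_mem_Ioo hnt (lt_of_lt_of_le (by linarith : (0:ℝ) < R/2)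
    (le_max_right _ _)) hlta
  set r := ‖c‖ with hr
  have hrpos : 0 < r :=
    lt_trans (by linarith : (0:ℝ) < R / 2) (lt_of_le_of_lt (le_max_right _ _) hc1)
  have hrR : r < R := hc2
  have hrclose : dist r R < δ := by
    rw [Real.dist_eq, abs_sub_lt_iff]
    constructor <;> [linarith; skip]
    have : R - δ < r := lt_of_le_of_lt (le_max_left _ _) hc1
    linarith
  obtain ⟨hP1, hP2⟩ := hδP hrclose
  -- evaluate: ‖p.eval c‖ = ‖p.coeff j0‖ * r ^ j0
  have heval : ‖p.eval c‖ = ‖p.coeff j0‖ * r ^ j0 := by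
    rw [eval_eq_sum_range]
    have := na_sum_eq hna (Finset.range (n + 1)) (fun j => p.coeff j * c ^ j)
      (i0 := j0) hj0mem ?_
    · rw [this, norm_mul, norm_pow]
    · intro j hj hne
      simp only [norm_mul, norm_pow, ← hr]
      rcases lt_trichotomy j j0 with h | h | h
      · exact hP1 j (Finset.mem_range.2 h)
      · exact absurd h hne
      · -- j > j0 : use (r/R)^j < (r/R)^{j0}
        have hfj : f j ≤ f j0 := hmax j
        have key : ‖p.coeff j‖ * r ^ j < ‖p.coeff j0‖ * r ^ j0 := by
          have h1 : ‖p.coeff j‖ * r ^ j = (f j) * (r / R) ^ j := by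
            rw [hf, div_pow]; field_simp
          have h2 : ‖p.coeff j0‖ * r ^ j0 = (f j0) * (r / R) ^ j0 := by
            rw [hf, div_pow]; field_simp
          rw [h1, h2]
          have hq : (0:ℝ) < r / R := by positivity
          have hq1 : r / R < 1 := (div_lt_one hR).2 hrR
          calc f j * (r / R) ^ j ≤ f j0 * (r / R) ^ j := by
                exact mul_le_mul_of_nonneg_right hfj (by positivity)
            _ < f j0 * (r / R) ^ j0 := by
                exact mul_lt_mul_of_pos_left (pow_lt_pow_right_of_lt_one₀ hq hq1 h) hfpos
        exact key
  have hmem : ‖p.eval c‖ ∈ S := ⟨c, hrR.le, rfl⟩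
  have : f j0 - ε < ‖p.eval c‖ := by rw [heval]; exact hP2
  have hle := le_csSup hSbdd hmem
  linarith
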